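/- The number of 2m-step closed walks at the origin in the restricted two-dimensional lattice L{x ≥ y ≥ -x} equals C_m², the square of the m-th Catalan number; odd-step closed walk counts are 0. -/

import Mathlib

open List SimpleGraph


/-- The one-dimensional integer lattice: `x ∼ y` iff `|x - y| = 1`. -/
def latZ : SimpleGraph ℤ where
  Adj x y := |x - y| = 1
  symm := ⟨by intro x y h; rwa [abs_sub_comm]⟩
  loopless := ⟨by intro x h; simp at h⟩

/-- The half-line graph on `ℕ = {0,1,2,...}`: `x ∼ y` iff `|x - y| = 1`. -/
def latN : SimpleGraph ℕ where
  Adj x y := |(x : ℤ) - y| = 1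
  symm := ⟨by intro x y h; rwa [abs_sub_comm]⟩
  loopless := ⟨by intro x h; simp at h⟩

/-- The number of `m`-step closed walks at `o` in `G`. -/
noncomputable def walkCount {V : Type*} (G : SimpleGraph V) (o : V) (m : ℕ) : ℕ :=
  Nat.card {w : G.Walk o o // w.length = m}

section ChainEncoding

variable {V : Type*} {G : SimpleGraph V}

/-- Build a walk from a chain list. -/
def ofChain (G : SimpleGraph V) : ∀ (a : V) (l : List V), List.IsChain G.Adj (a :: l) →
    G.Walk a (l.getLastD a)
  | _, [], _ => SimpleGraph.Walk.nil
  | a, b :: l, h =>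
    (SimpleGraph.Walk.cons (List.chain_cons.mp h).1
      (ofChain G b l (List.chain_cons.mp h).2)).copy rfl (by rw [List.getLastD_cons])

lemma ofChain_length (a : V) (l : List V) (h : List.IsChain G.Adj (a :: l)) :
    (ofChain G a l h).length = l.length := by
  induction l generalizing a with
  | nil => rfl
  | cons b t ih => simp [ofChain, ih]

lemma ofChain_support_tail (a : V) (l : List V) (h : List.IsChain G.Adj (a :: l)) :
    (ofChain G a l h).support.tail = l := by
  induction l generalizing a with
  | nil => rfl
  | cons b t ih =>
    simp only [ofChain, SimpleGraph.Walk.support_copy, SimpleGraph.Walk.support_cons,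
      List.tail_cons]
    rw [SimpleGraph.Walk.support_eq_cons, ih]

lemma support_tail_chain {a b : V} (w : G.Walk a b) : List.IsChain G.Adj (a :: w.support.tail) := by
  have := w.isChain_adj_support
  rwa [w.support_eq_cons] at this

lemma support_tail_getLastD {a b : V} (w : G.Walk a b) : w.support.tail.getLastD a = b := by
  induction w with
  | nil => rfl
  | cons h p ih =>
    rw [SimpleGraph.Walk.support_cons, List.tail_cons, p.support_eq_cons, List.getLastD_cons]
    exact ih

lemma support_tail_length {a b : V} (w : G.Walk a b) : w.support.tail.length = w.length := by
  have h := w.length_support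
  rw [w.support_eq_cons] at h
  simp only [List.length_cons] at h
  omega

lemma support_injective {a b : V} : ∀ {w w' : G.Walk a b}, w.support = w'.support → w = w' := by
  intro w
  induction w with
  | nil =>
    intro w' h
    cases w' with
    | @cons _ v _ h' p' =>
      rw [SimpleGraph.Walk.support_nil, SimpleGraph.Walk.support_cons, p'.support_eq_cons] at h
      simp at h
    | nil => rfl
  | @cons u v c h p ih =>
    intro w' hs
    cases w' with
    | nil =>
      rw [SimpleGraph.Walk.support_nil, SimpleGraph.Walk.support_cons, p.support_eq_cons] at hs
      simp at hs
    | @cons _ v' _ h' p' =>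
      rw [SimpleGraph.Walk.support_cons, SimpleGraph.Walk.support_cons] at hs
      have hs2 : p.support = p'.support := by injection hs
      have hv : v = v' := by
        rw [p.support_eq_cons, p'.support_eq_cons] at hs2
        injection hs2
      subst hv
      rw [ih hs2]

/-- Walks of length n correspond to chain lists. -/
noncomputable def walkEquivChain (G : SimpleGraph V) (a b : V) (n : ℕ) :
    {w : G.Walk a b // w.length = n} ≃
      {l : List V // List.IsChain G.Adj (a :: l) ∧ l.getLastD a = b ∧ l.length = n} := by
  refine Equiv.ofBijective
    (fun w => ⟨w.1.support.tail, support_tail_chain w.1, support_tail_getLastD w.1,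
      by rw [support_tail_length, w.2]⟩) ⟨?_, ?_⟩
  · rintro ⟨w, hw⟩ ⟨w', hw'⟩ h
    simp only [Subtype.mk.injEq] at h ⊢
    apply support_injective
    rw [w.support_eq_cons, w'.support_eq_cons, h]
  · rintro ⟨l, hc, hl, hn⟩
    refine ⟨⟨(ofChain G a l hc).copy rfl hl, by simp [ofChain_length, hn]⟩, ?_⟩
    exact Subtype.ext (by simp [ofChain_support_tail])

end ChainEncoding

section Embed

lemma getLastD_map' {α β : Type*} (f : α → β) (l : List α) (a : α) :
    (l.map f).getLastD (f a) = f (l.getLastD a) := by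
  induction l generalizing a with
  | nil => rfl
  | cons x t ih => rw [List.map_cons, List.getLastD_cons, List.getLastD_cons, ih]

variable {V W : Type*} {G : SimpleGraph V} {H : SimpleGraph W}

lemma chain_lift (φ : V → W) (hadj : ∀ v v', G.Adj v v' ↔ H.Adj (φ v) (φ v'))
    (hlift : ∀ (v : V) (w' : W), H.Adj (φ v) w' → ∃ v', φ v' = w') :
    ∀ (l' : List W) (a : V), List.IsChain H.Adj ((φ a) :: l') →
      ∃ l : List V, l.map φ = l' ∧ List.IsChain G.Adj (a :: l) := by
  intro l'
  induction l' with
  | nil => exact fun a _ => ⟨[], rfl, List.IsChain.singleton _⟩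
  | cons w t ih =>
    intro a hc
    rw [List.chain_cons] at hc
    obtain ⟨v, rfl⟩ := hlift a w hc.1
    obtain ⟨l, rfl, hcl⟩ := ih v hc.2
    exact ⟨v :: l, rfl, List.chain_cons.mpr ⟨(hadj a v).mpr hc.1, hcl⟩⟩

/-- Walk-lifting equivalence through an adjacency-reflecting embedding. -/
noncomputable def chainEquivOfEmbed (φ : V → W) (hinj : Function.Injective φ)
    (hadj : ∀ v v', G.Adj v v' ↔ H.Adj (φ v) (φ v'))
    (hlift : ∀ (v : V) (w' : W), H.Adj (φ v) w' → ∃ v', φ v' = w') (a b : V) (n : ℕ) :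
    {l : List V // List.IsChain G.Adj (a :: l) ∧ l.getLastD a = b ∧ l.length = n} ≃
      {l' : List W // List.IsChain H.Adj ((φ a) :: l') ∧ l'.getLastD (φ a) = φ b ∧ l'.length = n} := by
  refine Equiv.ofBijective (fun l => ⟨l.1.map φ, ?_, ?_, by simp [l.2.2.2]⟩) ⟨?_, ?_⟩
  · exact (List.isChain_cons_map φ).mpr (l.2.1.imp fun _ _ h => (hadj _ _).mp h)
  · rw [getLastD_map', l.2.2.1]
  · rintro ⟨l, hl⟩ ⟨l', hl'⟩ h
    simp only [Subtype.mk.injEq] at h ⊢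
    exact List.map_injective_iff.mpr hinj h
  · rintro ⟨l', hc, hla, hln⟩
    obtain ⟨l, rfl, hcl⟩ := chain_lift φ hadj hlift l' a hc
    rw [getLastD_map'] at hla
    exact ⟨⟨l, hcl, hinj hla, by simpa using hln⟩, rfl⟩

end Embed

section Tensor

/-- The "diagonal-step" (tensor-square) graph of `latN` on `ℕ × ℕ`. -/
def latN2 : SimpleGraph (ℕ × ℕ) where
  Adj p q := latN.Adj p.1 q.1 ∧ latN.Adj p.2 q.2
  symm := ⟨by intro p q h; exact ⟨h.1.symm, h.2.symm⟩⟩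
  loopless := ⟨by intro p h; exact latN.loopless.irrefl p.1 h.1⟩

lemma chain_latN2 (p : ℕ × ℕ) (l : List (ℕ × ℕ)) :
    List.IsChain latN2.Adj (p :: l) ↔
      List.IsChain latN.Adj (p.1 :: (l.map Prod.fst)) ∧ List.IsChain latN.Adj (p.2 :: (l.map Prod.snd)) := by
  induction l generalizing p with
  | nil => simp
  | cons q t ih =>
    simp only [List.map_cons, List.chain_cons, ih q]
    constructor
    · rintro ⟨⟨h1, h2⟩, h3, h4⟩; exact ⟨⟨h1, h3⟩, h2, h4⟩
    · rintro ⟨⟨h1, h3⟩, h2, h4⟩; exact ⟨⟨h1, h2⟩, h3, h4⟩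

noncomputable def latN2Equiv (n : ℕ) :
    {l : List (ℕ × ℕ) // List.IsChain latN2.Adj ((0, 0) :: l) ∧ l.getLastD (0, 0) = (0, 0) ∧
        l.length = n} ≃
      {l : List ℕ // List.IsChain latN.Adj (0 :: l) ∧ l.getLastD 0 = 0 ∧ l.length = n} ×
      {l : List ℕ // List.IsChain latN.Adj (0 :: l) ∧ l.getLastD 0 = 0 ∧ l.length = n} := by
  refine Equiv.ofBijective (fun l =>
    (⟨l.1.map Prod.fst, ((chain_latN2 _ _).mp l.2.1).1, ?_, by simp [l.2.2.2]⟩,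
     ⟨l.1.map Prod.snd, ((chain_latN2 _ _).mp l.2.1).2, ?_, by simp [l.2.2.2]⟩)) ⟨?_, ?_⟩
  · have := getLastD_map' Prod.fst l.1 (0, 0); rw [l.2.2.1] at this; exact this
  · have := getLastD_map' Prod.snd l.1 (0, 0); rw [l.2.2.1] at this; exact this
  · rintro ⟨l, hl⟩ ⟨l', hl'⟩ h
    simp only [Prod.mk.injEq, Subtype.mk.injEq] at h ⊢
    have hz : ∀ (l : List (ℕ × ℕ)), (l.map Prod.fst).zip (l.map Prod.snd) = l := by
      intro l; rw [List.zip_map']; simp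
    rw [← hz l, ← hz l', h.1, h.2]
  · rintro ⟨⟨l1, hc1, hla1, hln1⟩, ⟨l2, hc2, hla2, hln2⟩⟩
    have hle : l1.length ≤ l2.length := by omega
    have hle' : l2.length ≤ l1.length := by omega
    have h1 : (l1.zip l2).map Prod.fst = l1 := List.map_fst_zip hle
    have h2 : (l1.zip l2).map Prod.snd = l2 := List.map_snd_zip hle'
    refine ⟨⟨l1.zip l2, ?_, ?_, ?_⟩, ?_⟩
    · rw [chain_latN2, h1, h2]; exact ⟨hc1, hc2⟩
    · have e1 := getLastD_map' Prod.fst (l1.zip l2) ((0 : ℕ), (0 : ℕ))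
      have e2 := getLastD_map' Prod.snd (l1.zip l2) ((0 : ℕ), (0 : ℕ))
      rw [h1, hla1] at e1
      rw [h2, hla2] at e2
      exact Prod.ext e1.symm e2.symm
    · rw [List.length_zip]; omega
    · simp only [Prod.mk.injEq, Subtype.mk.injEq]
      exact ⟨h1, h2⟩

end Tensor

section Dyck

open DyckStep

lemma latN_adj (a b : ℕ) : latN.Adj a b ↔ (b = a + 1 ∨ a = b + 1) := by
  show |(a : ℤ) - b| = 1 ↔ _
  rw [abs_eq (by norm_num : (0:ℤ) ≤ 1)]
  omega

/-- The list of steps of a walk on `ℕ` given by its position list. -/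
def stepsOf : ℕ → List ℕ → List DyckStep
  | _, [] => []
  | a, x :: t => (if x = a + 1 then U else D) :: stepsOf x t

/-- The position list of a walk on `ℕ` given by its steps. -/
def posOf : ℕ → List DyckStep → List ℕ
  | _, [] => []
  | a, U :: t => (a + 1) :: posOf (a + 1) t
  | a, D :: t => (a - 1) :: posOf (a - 1) t

lemma length_posOf : ∀ (d : List DyckStep) (a : ℕ), (posOf a d).length = d.length
  | [], _ => rfl
  | U :: t, a => by simp [posOf, length_posOf t]
  | D :: t, a => by simp [posOf, length_posOf t]

lemma stepsOf_posOf : ∀ (d : List DyckStep) (a : ℕ), stepsOf a (posOf a d) = d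
  | [], _ => rfl
  | U :: t, a => by simp [posOf, stepsOf, stepsOf_posOf t]
  | D :: t, a => by
    simp only [posOf, stepsOf, List.cons.injEq]
    refine ⟨by simp only [if_neg (by omega : ¬ a - 1 = a + 1)], stepsOf_posOf t _⟩

lemma posOf_stepsOf : ∀ (l : List ℕ) (a : ℕ), List.IsChain latN.Adj (a :: l) →
    posOf a (stepsOf a l) = l
  | [], _, _ => rfl
  | x :: t, a, h => by
    obtain ⟨h1, h2⟩ := List.chain_cons.mp h
    rw [latN_adj] at h1
    by_cases hx : x = a + 1
    · subst hx
      simp only [stepsOf, if_pos rfl, ↓reduceIte, posOf, List.cons.injEq]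
      exact ⟨by trivial, posOf_stepsOf t _ h2⟩
    · have hx2 : x = a - 1 := by omega
      subst hx2
      simp only [stepsOf, if_neg hx, posOf, List.cons.injEq]
      exact ⟨by trivial, posOf_stepsOf t _ h2⟩

lemma chain_posOf : ∀ (d : List DyckStep) (a : ℕ),
    List.IsChain latN.Adj (a :: (posOf a d)) ↔
      ∀ i, (d.take i).count D ≤ a + (d.take i).count U
  | [], a => by simp [posOf]
  | U :: t, a => by
    simp only [posOf, List.chain_cons, latN_adj, chain_posOf t (a + 1)]
    constructor
    · rintro ⟨-, h⟩ i
      cases i with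
      | zero => simp
      | succ j =>
        have := h j
        simp only [List.take_succ_cons]
        simp [List.count_cons] at this ⊢
        omega
    · intro h
      refine ⟨by simp, fun j => ?_⟩
      have := h (j + 1)
      simp only [List.take_succ_cons] at this
      simp [List.count_cons] at this
      omega
  | D :: t, a => by
    simp only [posOf, List.chain_cons, latN_adj, chain_posOf t (a - 1)]
    constructor
    · rintro ⟨h0, h⟩ i
      have ha : 1 ≤ a := by omega
      cases i with
      | zero => simp
      | succ j =>
        have := h j
        simp only [List.take_succ_cons]
        simp [List.count_cons] at this ⊢
        omega
    · intro h
      have ha : 1 ≤ a := by simpa using h 1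
      refine ⟨by omega, fun j => ?_⟩
      have := h (j + 1)
      simp only [List.take_succ_cons] at this
      simp [List.count_cons] at this
      omega

lemma getLastD_posOf : ∀ (d : List DyckStep) (a : ℕ),
    List.IsChain latN.Adj (a :: (posOf a d)) →
      (posOf a d).getLastD a + d.count D = a + d.count U
  | [], a, _ => by simp [posOf]
  | U :: t, a, h => by
    obtain ⟨-, h2⟩ := List.chain_cons.mp (by simpa only [posOf] using h)
    have := getLastD_posOf t (a + 1) h2
    simp only [posOf, List.getLastD_cons]
    simp [List.count_cons] at this ⊢
    omega
  | D :: t, a, h => by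
    obtain ⟨h1, h2⟩ := List.chain_cons.mp (by simpa only [posOf] using h)
    rw [latN_adj] at h1
    have ha : 1 ≤ a := by omega
    have := getLastD_posOf t (a - 1) h2
    simp only [posOf, List.getLastD_cons]
    simp [List.count_cons] at this ⊢
    omega

noncomputable def dyckEquiv (n : ℕ) :
    {l : List ℕ // List.IsChain latN.Adj (0 :: l) ∧ l.getLastD 0 = 0 ∧ l.length = n} ≃
      {p : DyckWord // p.toList.length = n} := by
  refine Equiv.ofBijective (fun l => ⟨⟨stepsOf 0 l.1, ?_, ?_⟩, ?_⟩) ⟨?_, ?_⟩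
  · -- count_U_eq_count_D
    obtain ⟨hc, hla, -⟩ := l.2
    have hre : posOf 0 (stepsOf 0 l.1) = l.1 := posOf_stepsOf l.1 0 hc
    have := getLastD_posOf (stepsOf 0 l.1) 0 (by rwa [hre])
    rw [hre, hla] at this
    omega
  · -- prefix condition
    intro i
    obtain ⟨hc, -, -⟩ := l.2
    have hre : posOf 0 (stepsOf 0 l.1) = l.1 := posOf_stepsOf l.1 0 hc
    have := (chain_posOf (stepsOf 0 l.1) 0).mp (by rwa [hre])
    simpa using this i
  · -- length
    obtain ⟨hc, -, hn⟩ := l.2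
    have hre : posOf 0 (stepsOf 0 l.1) = l.1 := posOf_stepsOf l.1 0 hc
    have := length_posOf (stepsOf 0 l.1) 0
    rw [hre] at this
    simp only [DyckWord.toList]
    omega
  · -- injective
    rintro ⟨l, hl⟩ ⟨l', hl'⟩ h
    simp only [Subtype.mk.injEq, DyckWord.mk.injEq] at h ⊢
    have := posOf_stepsOf l 0 hl.1
    have h2 := posOf_stepsOf l' 0 hl'.1
    rw [← this, ← h2, h]
  · -- surjective
    rintro ⟨p, hp⟩
    refine ⟨⟨posOf 0 p.toList, ?_, ?_, ?_⟩, ?_⟩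
    · rw [chain_posOf]
      intro i
      simpa using p.count_D_le_count_U i
    · have hch : List.IsChain latN.Adj (0 :: (posOf 0 p.toList)) := by
        rw [chain_posOf]; intro i; simpa using p.count_D_le_count_U i
      have := getLastD_posOf p.toList 0 hch
      have hc := p.count_U_eq_count_D
      omega
    · rw [length_posOf]; exact hp
    · simp only [Subtype.mk.injEq]
      ext1
      exact stepsOf_posOf p.toList 0

lemma card_dyck_even (m : ℕ) :
    Nat.card {p : DyckWord // p.toList.length = 2 * m} = catalan m := by
  rw [Nat.card_congr (Equiv.subtypeEquivRight (q := fun p : DyckWord => p.semilength = m)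
    (fun p => by
      have := p.two_mul_semilength_eq_length
      omega))]
  rw [Nat.card_eq_fintype_card]
  exact DyckWord.card_dyckWord_semilength_eq_catalan m

lemma card_dyck_odd (m : ℕ) :
    Nat.card {p : DyckWord // p.toList.length = 2 * m + 1} = 0 := by
  have : IsEmpty {p : DyckWord // p.toList.length = 2 * m + 1} := by
    refine ⟨fun p => ?_⟩
    have := p.1.two_mul_semilength_eq_length
    omega
  exact Nat.card_of_isEmpty

end Dyck

section Wedge

lemma latN2_adj (p q : ℕ × ℕ) : latN2.Adj p q ↔ latN.Adj p.1 q.1 ∧ latN.Adj p.2 q.2 := Iff.rfl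

lemma latZ_adj (a b : ℤ) : latZ.Adj a b ↔ (a = b + 1 ∨ b = a + 1) := by
  show |a - b| = 1 ↔ _
  rw [abs_eq (by norm_num : (0:ℤ) ≤ 1)]
  omega

abbrev wedgeSet : Set (ℤ × ℤ) := {p : ℤ × ℤ | -p.1 ≤ p.2 ∧ p.2 ≤ p.1}

/-- The rotation map from the wedge to the quarter plane. -/
def φw (p : ↥wedgeSet) : ℕ × ℕ := ((p.1.1 - p.1.2).toNat, (p.1.1 + p.1.2).toNat)

lemma φw_inj : Function.Injective φw := by
  rintro ⟨⟨x, y⟩, hp⟩ ⟨⟨x', y'⟩, hq⟩ h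
  simp only [Set.mem_setOf_eq] at hp hq
  simp only [φw, Prod.mk.injEq] at h
  apply Subtype.ext
  simp only [Prod.mk.injEq]
  omega

lemma φw_adj (p q : ↥wedgeSet) :
    ((latZ □ latZ).induce wedgeSet).Adj p q ↔ latN2.Adj (φw p) (φw q) := by
  obtain ⟨⟨x, y⟩, hp⟩ := p
  obtain ⟨⟨x', y'⟩, hq⟩ := q
  simp only [Set.mem_setOf_eq] at hp hq
  simp only [SimpleGraph.induce, SimpleGraph.comap_adj, Function.Embedding.coe_subtype,
    SimpleGraph.boxProd_adj, latZ_adj, latN2_adj, latN_adj, φw]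
  omega

lemma φw_lift (p : ↥wedgeSet) (w' : ℕ × ℕ) (h : latN2.Adj (φw p) w') :
    ∃ q : ↥wedgeSet, φw q = w' := by
  obtain ⟨⟨x, y⟩, hp⟩ := p
  obtain ⟨u', v'⟩ := w'
  simp only [Set.mem_setOf_eq] at hp
  simp only [latN2_adj, latN_adj, φw] at h
  obtain ⟨h1 | h1, h2 | h2⟩ := h
  · exact ⟨⟨(x + 1, y), by simp only [Set.mem_setOf_eq]; omega⟩,
      by simp only [φw, Prod.mk.injEq]; omega⟩
  · exact ⟨⟨(x, y - 1), by simp only [Set.mem_setOf_eq]; omega⟩,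
      by simp only [φw, Prod.mk.injEq]; omega⟩
  · exact ⟨⟨(x, y + 1), by simp only [Set.mem_setOf_eq]; omega⟩,
      by simp only [φw, Prod.mk.injEq]; omega⟩
  · exact ⟨⟨(x - 1, y), by simp only [Set.mem_setOf_eq]; omega⟩,
      by simp only [φw, Prod.mk.injEq]; omega⟩

lemma walkCount_wedge (n : ℕ) :
    walkCount ((latZ □ latZ).induce {p : ℤ × ℤ | -p.1 ≤ p.2 ∧ p.2 ≤ p.1})
        ⟨(0, 0), by simp⟩ n = (Nat.card {p : DyckWord // p.toList.length = n}) ^ 2 := by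
  rw [walkCount, Nat.card_congr (walkEquivChain _ _ _ n),
    Nat.card_congr (chainEquivOfEmbed φw φw_inj φw_adj φw_lift _ _ n)]
  have h0 : φw ⟨(0, 0), by simp⟩ = (0, 0) := rfl
  rw [h0, Nat.card_congr (latN2Equiv n), Nat.card_prod,
    Nat.card_congr (dyckEquiv n), sq]

end Wedge

theorem walkCount_xgeygenegx (m : ℕ) :
    walkCount ((latZ □ latZ).induce {p : ℤ × ℤ | -p.1 ≤ p.2 ∧ p.2 ≤ p.1})
        ⟨(0, 0), by simp⟩ (2 * m) = catalan m ^ 2 ∧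
      walkCount ((latZ □ latZ).induce {p : ℤ × ℤ | -p.1 ≤ p.2 ∧ p.2 ≤ p.1})
        ⟨(0, 0), by simp⟩ (2 * m + 1) = 0 := by
  constructor
  · rw [walkCount_wedge, card_dyck_even]
  · rw [walkCount_wedge, card_dyck_odd]
    norm_num
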